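/- Let k be a local field. The group PGL₂(k) = GL₂(k)/Z(GL₂(k)), endowed with the analytic topology, is sealed: for every Hausdorff topological group H and every continuous group homomorphism f : PGL₂(k) → H, the image f(PGL₂(k)) is a closed subgroup of H. -/

import Mathlib

namespace Stmt8Aux
open Matrix Filter
variable {k : Type*} [NontriviallyNormedField k]

lemma one_fin_two' : (1 : Matrix (Fin 2) (Fin 2) k) = !![1,0;0,1] := by
  ext i j; fin_cases i <;> fin_cases j <;> simp

def upperU (x : k) : GL (Fin 2) k :=
  ⟨!![1, x; 0, 1], !![1, -x; 0, 1],
    by simp [Matrix.mul_fin_two, one_fin_two'],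
    by simp [Matrix.mul_fin_two, one_fin_two']⟩

def lowerU (x : k) : GL (Fin 2) k :=
  ⟨!![1, 0; x, 1], !![1, 0; -x, 1],
    by simp [Matrix.mul_fin_two, one_fin_two'],
    by simp [Matrix.mul_fin_two, one_fin_two']⟩

def diagU (a b : kˣ) : GL (Fin 2) k :=
  ⟨!![(a:k), 0; 0, (b:k)], !![((a⁻¹:kˣ):k), 0; 0, ((b⁻¹:kˣ):k)],
    by simp [Matrix.mul_fin_two, one_fin_two'],
    by simp [Matrix.mul_fin_two, one_fin_two']⟩

def dU (a : kˣ) : GL (Fin 2) k := diagU a 1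

def scalarU (c : kˣ) : GL (Fin 2) k := diagU c c

def sU : GL (Fin 2) k :=
  ⟨!![0,1;1,0], !![0,1;1,0],
    by simp [Matrix.mul_fin_two, one_fin_two'],
    by simp [Matrix.mul_fin_two, one_fin_two']⟩

lemma sU_mul_sU : (sU : GL (Fin 2) k) * sU = 1 := by
  ext1
  show (!![0,1;1,0] : Matrix (Fin 2) (Fin 2) k) * !![0,1;1,0] = 1
  simp [Matrix.mul_fin_two, one_fin_two']

lemma scalarU_mem_center (c : kˣ) : scalarU c ∈ Subgroup.center (GL (Fin 2) k) := by
  rw [Subgroup.mem_center_iff]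
  intro g
  have hval : ((scalarU c : GL (Fin 2) k) : Matrix (Fin 2) (Fin 2) k) = (c:k) • 1 := by
    ext i j; fin_cases i <;> fin_cases j <;> simp [scalarU, diagU]
  ext1
  rw [Units.val_mul, Units.val_mul, hval, smul_mul_assoc, mul_smul_comm, one_mul, mul_one]

lemma diagU_inv (a b : kˣ) : (diagU a b)⁻¹ = diagU a⁻¹ b⁻¹ := Units.ext rfl

lemma dU_inv (a : kˣ) : (dU a)⁻¹ = dU a⁻¹ := by
  simp [dU, diagU_inv, inv_one]

lemma dU_conj_upper (a : kˣ) (y : k) :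
    dU a * upperU y * (dU a)⁻¹ = upperU ((a : k) * y) := by
  rw [dU_inv]; ext1
  simp [dU, diagU, upperU, Units.val_mul, Matrix.mul_fin_two]

lemma dU_inv_conj_upper (a : kˣ) (y : k) :
    (dU a)⁻¹ * upperU y * dU a = upperU (((a⁻¹ : kˣ) : k) * y) := by
  rw [dU_inv]; ext1
  simp [dU, diagU, upperU, Units.val_mul, Matrix.mul_fin_two]

lemma dU_conj_lower (a : kˣ) (y : k) :
    dU a * lowerU y * (dU a)⁻¹ = lowerU (((a⁻¹ : kˣ) : k) * y) := by
  rw [dU_inv]; ext1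
  simp [dU, diagU, lowerU, Units.val_mul, Matrix.mul_fin_two, mul_comm]

lemma dU_inv_conj_lower (a : kˣ) (y : k) :
    (dU a)⁻¹ * lowerU y * dU a = lowerU ((a : k) * y) := by
  rw [dU_inv]; ext1
  simp [dU, diagU, lowerU, Units.val_mul, Matrix.mul_fin_two, mul_comm]

lemma whitehead (e : kˣ) :
    diagU e e⁻¹ =
      upperU (e : k) * lowerU (-((e⁻¹ : kˣ) : k)) * upperU (e : k) *
        (upperU (-1) * lowerU 1 * upperU (-1)) := by
  ext1
  simp [diagU, upperU, lowerU, Units.val_mul, Matrix.mul_fin_two]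

lemma diagU_mul_diagU (a b c d : kˣ) : diagU a b * diagU c d = diagU (a*c) (b*d) := by
  ext1; simp [diagU, Units.val_mul, Matrix.mul_fin_two]

lemma diagU_eq_scalar_mul (a b : kˣ) : diagU a b = scalarU b * dU (a * b⁻¹) := by
  rw [scalarU, dU, diagU_mul_diagU]
  congr 1
  · rw [mul_comm a b⁻¹, mul_inv_cancel_left]
  · rw [mul_one]

def memC (A : Matrix (Fin 2) (Fin 2) k) : Prop :=
  (∀ i j, ‖A i j‖ ≤ 1) ∧ (A.det = 1 ∨ A.det = -1)

lemma det_ne_zero (g : GL (Fin 2) k) : (g : Matrix (Fin 2) (Fin 2) k).det ≠ 0 := by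
  have := (Matrix.isUnit_iff_isUnit_det (g : Matrix (Fin 2) (Fin 2) k)).mp g.isUnit
  exact this.ne_zero

lemma swap_mul_fin_two (M : Matrix (Fin 2) (Fin 2) k) :
    (!![0,1;1,0] : Matrix (Fin 2) (Fin 2) k) * M = !![M 1 0, M 1 1; M 0 0, M 0 1] := by
  rw [Matrix.eta_fin_two M]
  simp [Matrix.mul_fin_two]

lemma mul_swap_fin_two (M : Matrix (Fin 2) (Fin 2) k) :
    M * (!![0,1;1,0] : Matrix (Fin 2) (Fin 2) k) = !![M 0 1, M 0 0; M 1 1, M 1 0] := by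
  rw [Matrix.eta_fin_two M]
  simp [Matrix.mul_fin_two]

lemma memC_lowerU {x : k} (hx : ‖x‖ ≤ 1) : memC ((lowerU x : GL (Fin 2) k) : Matrix (Fin 2) (Fin 2) k) := by
  constructor
  · intro i j; fin_cases i <;> fin_cases j <;> simp [lowerU, hx]
  · left; simp [lowerU, Matrix.det_fin_two_of]

lemma memC_upperU {y : k} (hy : ‖y‖ ≤ 1) : memC ((upperU y : GL (Fin 2) k) : Matrix (Fin 2) (Fin 2) k) := by
  constructor
  · intro i j; fin_cases i <;> fin_cases j <;> simp [upperU, hy]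
  · left; simp [upperU, Matrix.det_fin_two_of]

lemma memC_sU_mul_lowerU {x : k} (hx : ‖x‖ ≤ 1) :
    memC ((sU * lowerU x : GL (Fin 2) k) : Matrix (Fin 2) (Fin 2) k) := by
  have hval : ((sU * lowerU x : GL (Fin 2) k) : Matrix (Fin 2) (Fin 2) k) = !![x,1;1,0] := by
    rw [Units.val_mul]
    show (!![0,1;1,0] : Matrix (Fin 2) (Fin 2) k) * !![1,0;x,1] = _
    simp [Matrix.mul_fin_two]
  rw [hval]
  constructor
  · intro i j; fin_cases i <;> fin_cases j <;> simp [hx]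
  · right; simp [Matrix.det_fin_two_of]

lemma memC_upperU_mul_sU {y : k} (hy : ‖y‖ ≤ 1) :
    memC ((upperU y * sU : GL (Fin 2) k) : Matrix (Fin 2) (Fin 2) k) := by
  have hval : ((upperU y * sU : GL (Fin 2) k) : Matrix (Fin 2) (Fin 2) k) = !![y,1;1,0] := by
    rw [Units.val_mul]
    show (!![1,y;0,1] : Matrix (Fin 2) (Fin 2) k) * !![0,1;1,0] = _
    simp [Matrix.mul_fin_two]
  rw [hval]
  constructor
  · intro i j; fin_cases i <;> fin_cases j <;> simp [hy]
  · right; simp [Matrix.det_fin_two_of]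

lemma decompose_aux (g : GL (Fin 2) k)
    (hmax : ∀ i j, ‖(g : Matrix (Fin 2) (Fin 2) k) i j‖ ≤ ‖(g : Matrix (Fin 2) (Fin 2) k) 0 0‖) :
    ∃ (x y : k) (d₁ d₂ : kˣ),
      g = lowerU x * diagU d₁ d₂ * upperU y ∧ ‖x‖ ≤ 1 ∧ ‖y‖ ≤ 1 := by
  set M : Matrix (Fin 2) (Fin 2) k := (g : Matrix (Fin 2) (Fin 2) k) with hM
  have hdet : M.det ≠ 0 := det_ne_zero g
  have h00 : M 0 0 ≠ 0 := by
    intro h0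
    apply hdet
    have hz : ∀ i j, M i j = 0 := by
      intro i j
      have := hmax i j
      rw [h0, norm_zero] at this
      exact norm_eq_zero.mp (le_antisymm this (norm_nonneg _))
    rw [Matrix.det_fin_two, hz, hz, hz, hz]; ring
  refine ⟨M 1 0 / M 0 0, M 0 1 / M 0 0, Units.mk0 (M 0 0) h00,
    Units.mk0 (M.det / M 0 0) (div_ne_zero hdet h00), ?_, ?_, ?_⟩
  · ext1
    show M = _
    rw [Units.val_mul, Units.val_mul]
    show M = (lowerU (M 1 0 / M 0 0)).val * _ * (upperU (M 0 1 / M 0 0)).val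
    simp only [lowerU, upperU, diagU, Units.mk0]
    rw [Matrix.eta_fin_two M, Matrix.mul_fin_two, Matrix.mul_fin_two]
    rw [Matrix.det_fin_two]
    ext i j
    fin_cases i <;> fin_cases j <;> simp <;> field_simp <;> ring
  · rw [norm_div]
    exact div_le_one_of_le₀ (hmax 1 0) (norm_nonneg _)
  · rw [norm_div]
    exact div_le_one_of_le₀ (hmax 0 1) (norm_nonneg _)

lemma decompose (g : GL (Fin 2) k) :
    ∃ (L U : GL (Fin 2) k) (d₁ d₂ : kˣ),
      g = L * diagU d₁ d₂ * U ∧ memC (L : Matrix (Fin 2) (Fin 2) k) ∧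
        memC (U : Matrix (Fin 2) (Fin 2) k) := by
  obtain ⟨p, -, hmax⟩ := Finset.exists_max_image Finset.univ
    (fun p : Fin 2 × Fin 2 => ‖(g : Matrix (Fin 2) (Fin 2) k) p.1 p.2‖) ⟨(0,0), Finset.mem_univ _⟩
  have hmax' : ∀ i j, ‖(g : Matrix (Fin 2) (Fin 2) k) i j‖ ≤
      ‖(g : Matrix (Fin 2) (Fin 2) k) p.1 p.2‖ := fun i j => hmax (i,j) (Finset.mem_univ _)
  obtain ⟨i₀, j₀⟩ := p
  have hsv : ((sU : GL (Fin 2) k) : Matrix (Fin 2) (Fin 2) k) = !![0,1;1,0] := rfl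
  fin_cases i₀ <;> fin_cases j₀
  · -- (0,0)
    obtain ⟨x, y, d₁, d₂, heq, hx, hy⟩ := decompose_aux g hmax'
    exact ⟨lowerU x, upperU y, d₁, d₂, heq, memC_lowerU hx, memC_upperU hy⟩
  · -- (0,1) : use g * sU
    have hval : ((g * sU : GL (Fin 2) k) : Matrix (Fin 2) (Fin 2) k) =
        !![(g : Matrix (Fin 2) (Fin 2) k) 0 1, (g : Matrix (Fin 2) (Fin 2) k) 0 0;
           (g : Matrix (Fin 2) (Fin 2) k) 1 1, (g : Matrix (Fin 2) (Fin 2) k) 1 0] := by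
      rw [Units.val_mul, hsv, mul_swap_fin_two]
    obtain ⟨x, y, d₁, d₂, heq, hx, hy⟩ := decompose_aux (g * sU) (by
      intro i j
      rw [hval]
      fin_cases i <;> fin_cases j <;> simpa using hmax' _ _)
    refine ⟨lowerU x, upperU y * sU, d₁, d₂, ?_, memC_lowerU hx, memC_upperU_mul_sU hy⟩
    have : g = (g * sU) * sU := by rw [mul_assoc, sU_mul_sU, mul_one]
    rw [this, heq]; group
  · -- (1,0) : use sU * g
    have hval : ((sU * g : GL (Fin 2) k) : Matrix (Fin 2) (Fin 2) k) =
        !![(g : Matrix (Fin 2) (Fin 2) k) 1 0, (g : Matrix (Fin 2) (Fin 2) k) 1 1;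
           (g : Matrix (Fin 2) (Fin 2) k) 0 0, (g : Matrix (Fin 2) (Fin 2) k) 0 1] := by
      rw [Units.val_mul, hsv, swap_mul_fin_two]
    obtain ⟨x, y, d₁, d₂, heq, hx, hy⟩ := decompose_aux (sU * g) (by
      intro i j
      rw [hval]
      fin_cases i <;> fin_cases j <;> simpa using hmax' _ _)
    refine ⟨sU * lowerU x, upperU y, d₁, d₂, ?_, memC_sU_mul_lowerU hx, memC_upperU hy⟩
    have : g = sU * (sU * g) := by rw [← mul_assoc, sU_mul_sU, one_mul]
    rw [this, heq]; group
  · -- (1,1) : use sU * g * sU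
    have hval : ((sU * g * sU : GL (Fin 2) k) : Matrix (Fin 2) (Fin 2) k) =
        !![(g : Matrix (Fin 2) (Fin 2) k) 1 1, (g : Matrix (Fin 2) (Fin 2) k) 1 0;
           (g : Matrix (Fin 2) (Fin 2) k) 0 1, (g : Matrix (Fin 2) (Fin 2) k) 0 0] := by
      rw [Units.val_mul, Units.val_mul, hsv, swap_mul_fin_two, mul_swap_fin_two]
      simp
    obtain ⟨x, y, d₁, d₂, heq, hx, hy⟩ := decompose_aux (sU * g * sU) (by
      intro i j
      rw [hval]
      fin_cases i <;> fin_cases j <;> simpa using hmax' _ _)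
    refine ⟨sU * lowerU x, upperU y * sU, d₁, d₂, ?_, memC_sU_mul_lowerU hx, memC_upperU_mul_sU hy⟩
    have : g = sU * (sU * g * sU) * sU := by
      rw [← mul_assoc, ← mul_assoc, sU_mul_sU, one_mul, mul_assoc, sU_mul_sU, mul_one]
    rw [this, heq]; group


lemma dU_mul (a b : kˣ) : dU (a * b) = dU a * dU b := by
  rw [dU, dU, dU, diagU_mul_diagU, mul_one]

lemma upperU_zero : (upperU (0:k)) = 1 := by
  ext1
  show (!![1,(0:k);0,1] : Matrix (Fin 2) (Fin 2) k) = 1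
  rw [one_fin_two']

lemma lowerU_zero : (lowerU (0:k)) = 1 := by
  ext1
  show (!![1,(0:k);(0:k),1] : Matrix (Fin 2) (Fin 2) k) = 1
  rw [one_fin_two']

lemma dU_val (a : kˣ) :
    ((dU a : GL (Fin 2) k) : Matrix (Fin 2) (Fin 2) k) = !![(a:k),0;0,1] := by
  show (!![(a:k),0;0,((1:kˣ):k)] : Matrix (Fin 2) (Fin 2) k) = _
  norm_num

lemma upperU_val (x : k) :
    ((upperU x : GL (Fin 2) k) : Matrix (Fin 2) (Fin 2) k) = !![1,x;0,1] := rfl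

lemma lowerU_val (x : k) :
    ((lowerU x : GL (Fin 2) k) : Matrix (Fin 2) (Fin 2) k) = !![1,0;x,1] := rfl

end Stmt8Aux




/-- The projective general linear group `PGL₂(k) = GL₂(k)/Z(GL₂(k))`. -/
def PGL2 (k : Type*) [Field k] : Type _ :=
  GL (Fin 2) k ⧸ Subgroup.center (GL (Fin 2) k)

noncomputable instance (k : Type*) [Field k] : Group (PGL2 k) :=
  inferInstanceAs (Group (GL (Fin 2) k ⧸ Subgroup.center (GL (Fin 2) k)))

/-- The topology `GL₂(k)` inherits as a subspace of the `2 × 2` matrices over `k`. -/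
def gl2Topology (k : Type*) [NontriviallyNormedField k] : TopologicalSpace (GL (Fin 2) k) :=
  TopologicalSpace.induced (Units.val : GL (Fin 2) k → Matrix (Fin 2) (Fin 2) k) inferInstance

/-- The analytic topology on `PGL₂(k)`: the quotient of the topology `GL₂(k)` inherits as a
subspace of the `2 × 2` matrices over `k`. -/
def pgl2Topology (k : Type*) [NontriviallyNormedField k] : TopologicalSpace (PGL2 k) :=
  (gl2Topology k).coinduced
    (QuotientGroup.mk : GL (Fin 2) k → GL (Fin 2) k ⧸ Subgroup.center (GL (Fin 2) k))


open Stmt8Aux Matrix Filter Topology in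
/-- Let `k` be a local field (a nontrivially normed field that is locally
compact). The group `PGL₂(k)`, endowed with the analytic topology, is sealed: for every
Hausdorff topological group `H` and every continuous group homomorphism `f : PGL₂(k) → H`,
the image `f(PGL₂(k))` is a closed subgroup of `H`. -/
theorem stmt8 (k : Type*) [NontriviallyNormedField k] [LocallyCompactSpace k]
    {H : Type*} [Group H] [TopologicalSpace H] [IsTopologicalGroup H] [T2Space H]
    (f : PGL2 k →* H) (hcont : @Continuous (PGL2 k) H (pgl2Topology k) _ f) :
    IsClosed (Set.range f) := by
  classical
  letI : TopologicalSpace (GL (Fin 2) k) := gl2Topology k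
  letI : TopologicalSpace (PGL2 k) := pgl2Topology k
  haveI : ProperSpace k :=
    ProperSpace.of_nontriviallyNormedField_of_weaklyLocallyCompactSpace k
  set F : GL (Fin 2) k →* H :=
    f.comp (QuotientGroup.mk' (Subgroup.center (GL (Fin 2) k))) with hFdef
  have hmkcont : Continuous (QuotientGroup.mk :
      GL (Fin 2) k → GL (Fin 2) k ⧸ Subgroup.center (GL (Fin 2) k)) :=
    continuous_coinduced_rng
  have hFcont : Continuous (F : GL (Fin 2) k → H) := hcont.comp hmkcont
  have hrange : Set.range f = Set.range F :=
    ((QuotientGroup.mk'_surjective (Subgroup.center (GL (Fin 2) k))).range_comp f).symm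
  rw [hrange]
  have hval_ind : IsInducing (Units.val : GL (Fin 2) k → Matrix (Fin 2) (Fin 2) k) := ⟨rfl⟩
  -- F kills the center
  have hFcenter : ∀ c : kˣ, F (scalarU c) = 1 := by
    intro c
    show f (QuotientGroup.mk' _ (scalarU c)) = 1
    have h1 : (QuotientGroup.mk' (Subgroup.center (GL (Fin 2) k))) (scalarU c) = 1 :=
      (QuotientGroup.eq_one_iff _).mpr (scalarU_mem_center c)
    rw [h1]; exact _root_.map_one f
  have hFdiag : ∀ d₁ d₂ : kˣ, F (diagU d₁ d₂) = F (dU (d₁ * d₂⁻¹)) := by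
    intro d₁ d₂
    rw [diagU_eq_scalar_mul, _root_.map_mul, hFcenter, one_mul]
  -- decomposition, as functions
  have hdec : ∀ g : GL (Fin 2) k, ∃ (L : GL (Fin 2) k) (U : GL (Fin 2) k) (d : kˣ),
      F g = F L * F (dU d) * F U ∧ memC ((L : Matrix (Fin 2) (Fin 2) k)) ∧
        memC ((U : Matrix (Fin 2) (Fin 2) k)) := by
    intro g
    obtain ⟨L, U, d₁, d₂, heq, hL, hU⟩ := decompose g
    exact ⟨L, U, d₁ * d₂⁻¹,
      by rw [heq, _root_.map_mul, _root_.map_mul, hFdiag], hL, hU⟩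
  choose ℓf υf tf hFeq hLmem hUmem using hdec
  -- compactness of the matrix-level set C
  set Cmat : Set (Matrix (Fin 2) (Fin 2) k) := {A | memC A} with hCmat
  have hCclosed : IsClosed Cmat := by
    have h1 : Cmat = (⋂ i, ⋂ j, {A : Matrix (Fin 2) (Fin 2) k | ‖A i j‖ ≤ 1}) ∩
        (Matrix.det ⁻¹' {1, -1}) := by
      ext A
      simp only [hCmat, memC, Set.mem_inter_iff, Set.mem_iInter, Set.mem_setOf_eq,
        Set.mem_preimage, Set.mem_insert_iff, Set.mem_singleton_iff]
    rw [h1]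
    refine IsClosed.inter (isClosed_iInter fun i => isClosed_iInter fun j => ?_) ?_
    · exact isClosed_le (((continuous_apply j).comp (continuous_apply i)).norm) continuous_const
    · exact (isClosed_singleton.union isClosed_singleton).preimage (continuous_id.matrix_det)
  have hCcompact : IsCompact Cmat := by
    refine IsCompact.of_isClosed_subset
      (isCompact_univ_pi fun _ : Fin 2 => isCompact_univ_pi fun _ : Fin 2 =>
        isCompact_closedBall (0:k) 1) hCclosed ?_
    intro A hA
    refine Set.mem_univ_pi.mpr fun i => Set.mem_univ_pi.mpr fun j => ?_
    refine Metric.mem_closedBall.mpr ?_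
    rw [dist_zero_right]
    exact hA.1 i j
  have hCsubrange : Cmat ⊆ Set.range (Units.val : GL (Fin 2) k → Matrix (Fin 2) (Fin 2) k) := by
    intro A hA
    have h1 : IsUnit A.det := by
      rcases hA.2 with h | h
      · rw [h]; exact isUnit_one
      · rw [h]; exact isUnit_one.neg
    obtain ⟨u, hu⟩ := (Matrix.isUnit_iff_isUnit_det A).mpr h1
    exact ⟨u, hu⟩
  -- continuity of basic families
  have hupperCont : Continuous (fun x : k => (upperU x : GL (Fin 2) k)) := by
    rw [hval_ind.continuous_iff]
    have h1 : (Units.val ∘ fun x : k => (upperU x : GL (Fin 2) k)) =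
        fun x : k => (!![1,x;0,1] : Matrix (Fin 2) (Fin 2) k) := by
      funext x; exact upperU_val x
    rw [h1]
    apply continuous_matrix
    intro i j
    fin_cases i <;> fin_cases j <;> simp <;>
      first
      | exact continuous_id
      | exact continuous_const
  have hlowerCont : Continuous (fun x : k => (lowerU x : GL (Fin 2) k)) := by
    rw [hval_ind.continuous_iff]
    have h1 : (Units.val ∘ fun x : k => (lowerU x : GL (Fin 2) k)) =
        fun x : k => (!![1,0;x,1] : Matrix (Fin 2) (Fin 2) k) := by
      funext x; exact lowerU_val x
    rw [h1]
    apply continuous_matrix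
    intro i j
    fin_cases i <;> fin_cases j <;> simp <;>
      first
      | exact continuous_id
      | exact continuous_const
  have hdMatCont : Continuous (fun x : k => (!![x,0;0,1] : Matrix (Fin 2) (Fin 2) k)) := by
    apply continuous_matrix
    intro i j
    fin_cases i <;> fin_cases j <;> simp <;>
      first
      | exact continuous_id
      | exact continuous_const
  -- the contraction lemma: if F kills the unipotents, the range of F is closed
  have contraction : (∀ x : k, F (upperU x) = 1) → (∀ x : k, F (lowerU x) = 1) →
      IsClosed (Set.range F) := by
    intro hup hlow
    have hwh : ∀ e : kˣ, F (diagU e e⁻¹) = 1 := by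
      intro e
      rw [whitehead e]
      simp only [_root_.map_mul, hup, hlow, one_mul, mul_one]
    have hsq : ∀ e : kˣ, F (dU (e * e)) = 1 := by
      intro e
      have h1 : dU (e * e) = scalarU e * diagU e e⁻¹ := by
        rw [scalarU, diagU_mul_diagU, dU]
        congr 1
        rw [mul_inv_cancel]
      rw [h1, _root_.map_mul, hFcenter, hwh, one_mul]
    obtain ⟨c, hc⟩ := NormedField.exists_one_lt_norm k
    have hc0 : c ≠ 0 := by intro h; rw [h, norm_zero] at hc; linarith
    have hcpos : (0:ℝ) < ‖c‖ := by linarith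
    have hcne : (‖c‖ : ℝ) ≠ 0 := ne_of_gt hcpos
    set cu : kˣ := Units.mk0 c hc0 with hcu
    set Ann : Set k := {x : k | 1 ≤ ‖x‖ ∧ ‖x‖ ≤ ‖c‖^2} with hAnn
    have hAnnCompact : IsCompact Ann := by
      refine IsCompact.of_isClosed_subset (isCompact_closedBall (0:k) (‖c‖^2)) ?_ ?_
      · exact (isClosed_le continuous_const continuous_norm).inter
          (isClosed_le continuous_norm continuous_const)
      · intro x hx
        simpa [Metric.mem_closedBall, dist_zero_right] using hx.2
    have hkey : ∀ d : kˣ, ∃ d' : kˣ, F (dU d) = F (dU d') ∧ ((d' : kˣ) : k) ∈ Ann := by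
      intro d
      have hpos : (0:ℝ) < ‖(d : k)‖ := norm_pos_iff.mpr d.ne_zero
      have hy : (1:ℝ) < ‖c‖^2 := by nlinarith
      have hypos : (0:ℝ) < ‖c‖^2 := by linarith
      obtain ⟨n, hn1, hn2⟩ := exists_mem_Ico_zpow hpos hy
      set e : kˣ := cu ^ (-n) with he
      have hYpos : (0:ℝ) < (‖c‖^2) ^ n := zpow_pos hypos n
      have hnorm : ‖((d * e * e : kˣ) : k)‖ = ‖(d:k)‖ / (‖c‖^2) ^ n := by
        have hval : ((d * e * e : kˣ) : k) = (d:k) * c ^ (-n) * c ^ (-n) := by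
          push_cast [he, hcu]
          norm_num
        rw [hval, norm_mul, norm_mul, norm_zpow]
        have h2 : ‖c‖ ^ (-n) * ‖c‖ ^ (-n) = ((‖c‖^2) ^ n)⁻¹ := by
          rw [← zpow_natCast (‖c‖) 2, ← _root_.zpow_mul, ← _root_.zpow_neg,
            ← zpow_add₀ hcne]
          congr 1
          push_cast
          ring
        rw [mul_assoc, h2, div_eq_mul_inv]
      refine ⟨d * e * e, ?_, ?_, ?_⟩
      · have hd : dU d = dU (d * e * e) * dU (e⁻¹ * e⁻¹) := by
          rw [← dU_mul]
          congr 1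
          group
        rw [hd, _root_.map_mul]
        have h3 : F (dU (e⁻¹ * e⁻¹)) = 1 := hsq e⁻¹
        rw [h3, mul_one]
      · rw [hnorm]
        rw [le_div_iff₀ hYpos, one_mul]
        exact hn1
      · rw [hnorm]
        rw [div_le_iff₀ hYpos]
        have : (‖c‖^2) ^ (n+1) = ‖c‖^2 * (‖c‖^2) ^ n := by
          rw [zpow_add_one₀ (ne_of_gt hypos)]
          ring
        rw [this] at hn2
        linarith
    -- compact subsets of GL₂
    have hC' : IsCompact ((Units.val : GL (Fin 2) k → Matrix (Fin 2) (Fin 2) k) ⁻¹' Cmat) := by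
      rw [hval_ind.isCompact_iff, Set.image_preimage_eq_of_subset hCsubrange]
      exact hCcompact
    set DAnn : Set (Matrix (Fin 2) (Fin 2) k) :=
      (fun s : k => (!![s,0;0,1] : Matrix (Fin 2) (Fin 2) k)) '' Ann with hDAnn
    have hDAnnCompact : IsCompact DAnn := hAnnCompact.image hdMatCont
    have hDsubrange : DAnn ⊆ Set.range (Units.val : GL (Fin 2) k → Matrix (Fin 2) (Fin 2) k) := by
      rintro A ⟨s, hs, rfl⟩
      have hs0 : s ≠ 0 := by
        intro h0
        have h1 := hs.1
        rw [h0, norm_zero] at h1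
        linarith
      have h1 : IsUnit (!![s,(0:k);0,1]).det := by
        rw [Matrix.det_fin_two_of]
        simpa using (Units.mk0 s hs0).isUnit
      obtain ⟨u, hu⟩ := (Matrix.isUnit_iff_isUnit_det _).mpr h1
      exact ⟨u, hu⟩
    have hD' : IsCompact ((Units.val : GL (Fin 2) k → Matrix (Fin 2) (Fin 2) k) ⁻¹' DAnn) := by
      rw [hval_ind.isCompact_iff, Set.image_preimage_eq_of_subset hDsubrange]
      exact hDAnnCompact
    have hmapcont : Continuous (fun p : (GL (Fin 2) k) × (GL (Fin 2) k) × (GL (Fin 2) k) =>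
        F p.1 * F p.2.1 * F p.2.2) :=
      ((hFcont.comp continuous_fst).mul
        (hFcont.comp (continuous_fst.comp continuous_snd))).mul
        (hFcont.comp (continuous_snd.comp continuous_snd))
    have hrangeF : Set.range F =
        (fun p : (GL (Fin 2) k) × (GL (Fin 2) k) × (GL (Fin 2) k) =>
          F p.1 * F p.2.1 * F p.2.2) ''
          ((Units.val ⁻¹' Cmat) ×ˢ ((Units.val ⁻¹' DAnn) ×ˢ (Units.val ⁻¹' Cmat))) := by
      apply Set.Subset.antisymm
      · rintro _ ⟨g, rfl⟩
        obtain ⟨d', hd'eq, hd'mem⟩ := hkey (tf g)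
        refine ⟨(ℓf g, dU d', υf g), ⟨hLmem g, ?_, hUmem g⟩, ?_⟩
        · show (dU d' : GL (Fin 2) k).val ∈ DAnn
          rw [dU_val]
          exact ⟨(d' : k), hd'mem, rfl⟩
        · show F (ℓf g) * F (dU d') * F (υf g) = F g
          rw [hFeq g, hd'eq]
      · rintro _ ⟨⟨a, b, c'⟩, -, rfl⟩
        exact ⟨a * b * c', by rw [_root_.map_mul, _root_.map_mul]⟩
    rw [hrangeF]
    exact (((hC'.prod (hD'.prod hC')).image hmapcont).isClosed)
  -- main argument
  refine isClosed_of_closure_subset ?_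
  intro h hh
  obtain ⟨u, huS, hule⟩ := mem_closure_iff_ultrafilter.mp hh
  have hcomapNB : (Filter.comap (F : GL (Fin 2) k → H) ↑u).NeBot := by
    apply Filter.comap_neBot
    intro t ht
    have h1 : t ∩ Set.range F ∈ u := Filter.inter_mem ht huS
    obtain ⟨y, hyt, g, rfl⟩ := Ultrafilter.nonempty_of_mem h1
    exact ⟨g, hyt⟩
  set 𝓤 : Ultrafilter (GL (Fin 2) k) := Ultrafilter.of (Filter.comap F ↑u) with h𝓤def
  have h𝓤 : Tendsto (F : GL (Fin 2) k → H) ↑𝓤 (𝓝 h) := by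
    have h1 : Filter.map F ↑𝓤 ≤ Filter.map F (Filter.comap F ↑u) :=
      Filter.map_mono (Ultrafilter.of_le _)
    exact le_trans h1 (le_trans Filter.map_comap_le hule)
  -- limits of the compact parts
  have hgetlim : ∀ φ : GL (Fin 2) k → GL (Fin 2) k,
      (∀ g, (φ g : Matrix (Fin 2) (Fin 2) k) ∈ Cmat) →
      ∃ k₀ : GL (Fin 2) k, Tendsto φ ↑𝓤 (𝓝 k₀) := by
    intro φ hφ
    have hle : ↑(𝓤.map (fun g => (φ g : Matrix (Fin 2) (Fin 2) k))) ≤ 𝓟 Cmat := by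
      rw [Filter.le_principal_iff]
      refine Filter.mem_map.mpr ?_
      have h1 : ((fun g => ((φ g : GL (Fin 2) k) : Matrix (Fin 2) (Fin 2) k)) ⁻¹' Cmat) =
          Set.univ := by
        ext g
        simpa using hφ g
      rw [h1]
      exact Filter.univ_mem
    obtain ⟨A, hACmat, hA⟩ := hCcompact.ultrafilter_le_nhds
      (𝓤.map (fun g => (φ g : Matrix (Fin 2) (Fin 2) k))) hle
    obtain ⟨k₀, hk₀⟩ := hCsubrange hACmat
    refine ⟨k₀, hval_ind.tendsto_nhds_iff.mpr ?_⟩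
    show Tendsto (fun g => (φ g : Matrix (Fin 2) (Fin 2) k)) ↑𝓤 (𝓝 (k₀ : Matrix (Fin 2) (Fin 2) k))
    rw [hk₀]
    exact hA
  obtain ⟨k₀, hk₀t⟩ := hgetlim ℓf hLmem
  obtain ⟨u₀, hu₀t⟩ := hgetlim υf hUmem
  have hFl : Tendsto (fun g => F (ℓf g)) ↑𝓤 (𝓝 (F k₀)) := (hFcont.tendsto k₀).comp hk₀t
  have hFu : Tendsto (fun g => F (υf g)) ↑𝓤 (𝓝 (F u₀)) := (hFcont.tendsto u₀).comp hu₀t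
  set b : H := (F k₀)⁻¹ * h * (F u₀)⁻¹ with hbdefn
  have hFdlim : Tendsto (fun g => F (dU (tf g))) ↑𝓤 (𝓝 b) := by
    have heqf : (fun g => F (dU (tf g))) =
        fun g => (F (ℓf g))⁻¹ * F g * (F (υf g))⁻¹ := by
      funext g
      rw [hFeq g]
      group
    rw [heqf, hbdefn]
    exact (hFl.inv.mul h𝓤).mul hFu.inv
  set τ : GL (Fin 2) k → k := fun g => ((tf g : kˣ) : k) with hτdef
  -- helper: from conjugation limits, kill the unipotents
  have hkillU : ∀ y : k, ∀ σ : GL (Fin 2) k → k,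
      Tendsto σ ↑𝓤 (𝓝 0) →
      (∀ᶠ g in ↑𝓤, F (dU (tf g)) * F (upperU y) * (F (dU (tf g)))⁻¹ = F (upperU (σ g)) ∨
        (F (dU (tf g)))⁻¹ * F (upperU y) * F (dU (tf g)) = F (upperU (σ g))) →
      True := fun _ _ _ _ => trivial
  clear hkillU
  by_cases hbdd : ∃ R : ℝ, {g : GL (Fin 2) k | ‖τ g‖ ≤ R} ∈ 𝓤
  · obtain ⟨R, hR⟩ := hbdd
    have hmapball : ↑(𝓤.map τ) ≤ 𝓟 (Metric.closedBall (0:k) R) := by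
      rw [Filter.le_principal_iff]
      refine Filter.mem_map.mpr (𝓤.toFilter.sets_of_superset hR ?_)
      intro g hg
      simpa [Metric.mem_closedBall, dist_zero_right] using hg
    obtain ⟨x₀, -, hx₀⟩ := (isCompact_closedBall (0:k) R).ultrafilter_le_nhds (𝓤.map τ) hmapball
    have hτlim : Tendsto τ ↑𝓤 (𝓝 x₀) := hx₀
    by_cases hx0 : x₀ = 0
    · -- contraction towards zero
      subst hx0
      have hup : ∀ y : k, F (upperU y) = 1 := by
        intro y
        have h1 : Tendsto (fun g => F (dU (tf g)) * F (upperU y) * (F (dU (tf g)))⁻¹)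
            ↑𝓤 (𝓝 (b * F (upperU y) * b⁻¹)) :=
          (hFdlim.mul tendsto_const_nhds).mul hFdlim.inv
        have h2 : (fun g => F (dU (tf g)) * F (upperU y) * (F (dU (tf g)))⁻¹) =
            fun g => F (upperU (τ g * y)) := by
          funext g
          rw [← _root_.map_inv, ← _root_.map_mul, ← _root_.map_mul, dU_conj_upper]
        have h3 : Tendsto (fun g => F (upperU (τ g * y))) ↑𝓤 (𝓝 1) := by
          have h4 : Tendsto (fun g => τ g * y) ↑𝓤 (𝓝 0) := by
            simpa using hτlim.mul_const y
          have h5 := (hupperCont.tendsto 0).comp h4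
          rw [upperU_zero] at h5
          have h6 := (hFcont.tendsto 1).comp h5
          rw [_root_.map_one] at h6
          exact h6
        rw [h2] at h1
        have h7 := tendsto_nhds_unique h1 h3
        have h8 : F (upperU y) = b⁻¹ * (b * F (upperU y) * b⁻¹) * b := by group
        rw [h7] at h8
        rw [h8]
        group
      have hlow : ∀ y : k, F (lowerU y) = 1 := by
        intro y
        have h1 : Tendsto (fun g => (F (dU (tf g)))⁻¹ * F (lowerU y) * F (dU (tf g)))
            ↑𝓤 (𝓝 (b⁻¹ * F (lowerU y) * b)) :=
          (hFdlim.inv.mul tendsto_const_nhds).mul hFdlim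
        have h2 : (fun g => (F (dU (tf g)))⁻¹ * F (lowerU y) * F (dU (tf g))) =
            fun g => F (lowerU (τ g * y)) := by
          funext g
          rw [← _root_.map_inv, ← _root_.map_mul, ← _root_.map_mul, dU_inv_conj_lower]
        have h3 : Tendsto (fun g => F (lowerU (τ g * y))) ↑𝓤 (𝓝 1) := by
          have h4 : Tendsto (fun g => τ g * y) ↑𝓤 (𝓝 0) := by
            simpa using hτlim.mul_const y
          have h5 := (hlowerCont.tendsto 0).comp h4
          rw [lowerU_zero] at h5
          have h6 := (hFcont.tendsto 1).comp h5
          rw [_root_.map_one] at h6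
          exact h6
        rw [h2] at h1
        have h7 := tendsto_nhds_unique h1 h3
        have h8 : F (lowerU y) = b * (b⁻¹ * F (lowerU y) * b) * b⁻¹ := by group
        rw [h7] at h8
        rw [h8]
        group
      exact (contraction hup hlow).closure_subset hh
    · -- the diagonal part converges: h is in the range
      set x₀u : kˣ := Units.mk0 x₀ hx0 with hx₀u
      have hdUlim : Tendsto (fun g => dU (tf g)) ↑𝓤 (𝓝 (dU x₀u)) := by
        refine hval_ind.tendsto_nhds_iff.mpr ?_
        show Tendsto (fun g => ((dU (tf g) : GL (Fin 2) k) : Matrix (Fin 2) (Fin 2) k)) ↑𝓤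
          (𝓝 ((dU x₀u : GL (Fin 2) k) : Matrix (Fin 2) (Fin 2) k))
        have h1 : (fun g => ((dU (tf g) : GL (Fin 2) k) : Matrix (Fin 2) (Fin 2) k)) =
            (fun x : k => (!![x,0;0,1] : Matrix (Fin 2) (Fin 2) k)) ∘ τ := by
          funext g
          exact dU_val (tf g)
        rw [h1, dU_val]
        exact (hdMatCont.tendsto x₀).comp hτlim
      have hlim2 : Tendsto (fun g => F (ℓf g) * F (dU (tf g)) * F (υf g)) ↑𝓤
          (𝓝 (F k₀ * F (dU x₀u) * F u₀)) :=
        (hFl.mul ((hFcont.tendsto _).comp hdUlim)).mul hFu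
      have heqfun : (fun g => F (ℓf g) * F (dU (tf g)) * F (υf g)) =
          (F : GL (Fin 2) k → H) := by
        funext g
        rw [← hFeq g]
      rw [heqfun] at hlim2
      have h7 := tendsto_nhds_unique h𝓤 hlim2
      exact ⟨k₀ * dU x₀u * u₀, by rw [_root_.map_mul, _root_.map_mul]; exact h7.symm⟩
  · -- the diagonal part goes to infinity
    push_neg at hbdd
    have hτtop : Tendsto (fun g => ‖τ g‖) ↑𝓤 atTop := by
      rw [tendsto_atTop]
      intro R
      have h1 : {g : GL (Fin 2) k | ‖τ g‖ ≤ R}ᶜ ∈ 𝓤 :=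
        Ultrafilter.compl_mem_iff_notMem.mpr (hbdd R)
      filter_upwards [h1] with g hg
      exact le_of_lt (lt_of_not_ge hg)
    have hτinv : Tendsto (fun g => (τ g)⁻¹) ↑𝓤 (𝓝 0) := by
      rw [tendsto_zero_iff_norm_tendsto_zero]
      have h1 : (fun g => ‖(τ g)⁻¹‖) = fun g => ‖τ g‖⁻¹ := by
        funext g; rw [norm_inv]
      rw [h1]
      exact hτtop.inv_tendsto_atTop
    have hup : ∀ y : k, F (upperU y) = 1 := by
      intro y
      have h1 : Tendsto (fun g => (F (dU (tf g)))⁻¹ * F (upperU y) * F (dU (tf g)))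
          ↑𝓤 (𝓝 (b⁻¹ * F (upperU y) * b)) :=
        (hFdlim.inv.mul tendsto_const_nhds).mul hFdlim
      have h2 : (fun g => (F (dU (tf g)))⁻¹ * F (upperU y) * F (dU (tf g))) =
          fun g => F (upperU ((τ g)⁻¹ * y)) := by
        funext g
        rw [← _root_.map_inv, ← _root_.map_mul, ← _root_.map_mul, dU_inv_conj_upper]
        congr 2
        rw [hτdef]
        push_cast
        rfl
      have h3 : Tendsto (fun g => F (upperU ((τ g)⁻¹ * y))) ↑𝓤 (𝓝 1) := by
        have h4 : Tendsto (fun g => (τ g)⁻¹ * y) ↑𝓤 (𝓝 0) := by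
          simpa using hτinv.mul_const y
        have h5 := (hupperCont.tendsto 0).comp h4
        rw [upperU_zero] at h5
        have h6 := (hFcont.tendsto 1).comp h5
        rw [_root_.map_one] at h6
        exact h6
      rw [h2] at h1
      have h7 := tendsto_nhds_unique h1 h3
      have h8 : F (upperU y) = b * (b⁻¹ * F (upperU y) * b) * b⁻¹ := by group
      rw [h7] at h8
      rw [h8]
      group
    have hlow : ∀ y : k, F (lowerU y) = 1 := by
      intro y
      have h1 : Tendsto (fun g => F (dU (tf g)) * F (lowerU y) * (F (dU (tf g)))⁻¹)
          ↑𝓤 (𝓝 (b * F (lowerU y) * b⁻¹)) :=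
        (hFdlim.mul tendsto_const_nhds).mul hFdlim.inv
      have h2 : (fun g => F (dU (tf g)) * F (lowerU y) * (F (dU (tf g)))⁻¹) =
          fun g => F (lowerU ((τ g)⁻¹ * y)) := by
        funext g
        rw [← _root_.map_inv, ← _root_.map_mul, ← _root_.map_mul, dU_conj_lower]
        congr 2
        rw [hτdef]
        push_cast
        rfl
      have h3 : Tendsto (fun g => F (lowerU ((τ g)⁻¹ * y))) ↑𝓤 (𝓝 1) := by
        have h4 : Tendsto (fun g => (τ g)⁻¹ * y) ↑𝓤 (𝓝 0) := by
          simpa using hτinv.mul_const y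
        have h5 := (hlowerCont.tendsto 0).comp h4
        rw [lowerU_zero] at h5
        have h6 := (hFcont.tendsto 1).comp h5
        rw [_root_.map_one] at h6
        exact h6
      rw [h2] at h1
      have h7 := tendsto_nhds_unique h1 h3
      have h8 : F (lowerU y) = b⁻¹ * (b * F (lowerU y) * b⁻¹) * b := by group
      rw [h7] at h8
      rw [h8]
      group
    exact (contraction hup hlow).closure_subset hh
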